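/- Let 0 < s < 1/2, let φ₁ : ℝ → ℝ be measurable, and let φ₂ : ℝ → ℂ with φ₂ ∈ L²(ℝ) ∩ L^{2/(1−2s)}(ℝ). Then the function x ↦ e^{iφ₁(x)} φ₂(x) satisfies [e^{iφ₁} φ₂]_{s,2} ≤ ‖φ₂‖_{L^{2/(1−2s)}} · [φ₁]_{s,1/s} + [φ₂]_{s,2}. -/

import Mathlib

open MeasureTheory Complex ENNReal

/-- The Besov-type seminorm
`[f]_{s,p} = (∫₀^∞ t^{−1−2s} (sup_{|y|≤t} ‖f(·−y) − f‖_{L^p})² dt)^{1/2} ∈ [0,∞]`. -/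
noncomputable def besovSeminorm {E : Type*} [NormedAddCommGroup E]
    (s : ℝ) (p : ℝ≥0∞) (f : ℝ → E) : ℝ≥0∞ :=
  (∫⁻ t in Set.Ioi (0:ℝ),
      ENNReal.ofReal (t ^ (-1 - 2*s)) *
        (⨆ (y : ℝ) (_ : |y| ≤ t), eLpNorm (fun x => f (x - y) - f x) p volume) ^ 2)
    ^ ((1:ℝ)/2)

lemma norm_exp_mul_I_sub_one_le (t : ℝ) : ‖Complex.exp (↑t * Complex.I) - 1‖ ≤ |t| := by
  have hz : Complex.exp (↑t * Complex.I) - 1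
      = ↑(Real.cos t - 1) + ↑(Real.sin t) * Complex.I := by
    rw [Complex.exp_mul_I]; push_cast; ring
  have hsq : ‖Complex.exp (↑t * Complex.I) - 1‖ ^ 2 = 2 - 2 * Real.cos t := by
    rw [hz, Complex.sq_norm, Complex.normSq_add_mul_I]
    nlinarith [Real.sin_sq_add_cos_sq t]
  have hle : ‖Complex.exp (↑t * Complex.I) - 1‖ ^ 2 ≤ |t| ^ 2 := by
    rw [hsq, _root_.sq_abs]
    nlinarith [Real.one_sub_sq_div_two_le_cos (x := t)]
  exact (pow_le_pow_iff_left₀ (norm_nonneg _) (abs_nonneg _) (two_ne_zero)).mp hle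

lemma norm_exp_I_mul_sub_le (a b : ℝ) :
    ‖Complex.exp (Complex.I * ↑a) - Complex.exp (Complex.I * ↑b)‖ ≤ |a - b| := by
  have h : Complex.exp (Complex.I * ↑a) - Complex.exp (Complex.I * ↑b)
      = Complex.exp (↑b * Complex.I) * (Complex.exp (↑(a - b) * Complex.I) - 1) := by
    rw [mul_sub, mul_one, ← Complex.exp_add]
    push_cast
    ring_nf
  rw [h, norm_mul, Complex.norm_exp_ofReal_mul_I, one_mul]
  exact norm_exp_mul_I_sub_one_le _

noncomputable def supDiff {E : Type*} [NormedAddCommGroup E]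
    (p : ℝ≥0∞) (f : ℝ → E) (t : ℝ) : ℝ≥0∞ :=
  ⨆ (y : ℝ) (_ : |y| ≤ t), eLpNorm (fun x => f (x - y) - f x) p volume

lemma besov_eq {E : Type*} [NormedAddCommGroup E] (s : ℝ) (p : ℝ≥0∞) (f : ℝ → E) :
    besovSeminorm s p f
      = (∫⁻ t in Set.Ioi (0:ℝ),
          ENNReal.ofReal (t ^ (-1 - 2*s)) * supDiff p f t ^ 2) ^ ((1:ℝ)/2) := rfl

lemma le_supDiff {E : Type*} [NormedAddCommGroup E] {p : ℝ≥0∞} {f : ℝ → E} {y t : ℝ}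
    (h : |y| ≤ t) : eLpNorm (fun x => f (x - y) - f x) p volume ≤ supDiff p f t :=
  le_iSup₂ (f := fun (y : ℝ) (_ : |y| ≤ t) => eLpNorm (fun x => f (x - y) - f x) p volume) y h

lemma supDiff_mono {E : Type*} [NormedAddCommGroup E] (p : ℝ≥0∞) (f : ℝ → E) :
    Monotone (supDiff p f) := fun t t' h =>
  iSup₂_le fun y hy => le_supDiff (hy.trans h)

lemma sq_mul_rpow (a x : ℝ≥0∞) : a * x ^ 2 = (a ^ ((1:ℝ)/2) * x) ^ (2:ℝ) := by
  rw [ENNReal.mul_rpow_of_nonneg _ _ (by norm_num : (0:ℝ) ≤ 2), ← ENNReal.rpow_mul,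
    show (2:ℝ) = ((2:ℕ):ℝ) by norm_num, ENNReal.rpow_natCast]
  norm_num

lemma weighted_minkowski {w A B : ℝ → ℝ≥0∞}
    (hA : AEMeasurable (fun t => w t ^ ((1:ℝ)/2) * A t) (volume.restrict (Set.Ioi (0:ℝ))))
    (hB : AEMeasurable (fun t => w t ^ ((1:ℝ)/2) * B t) (volume.restrict (Set.Ioi (0:ℝ)))) :
    (∫⁻ t in Set.Ioi (0:ℝ), w t * (A t + B t) ^ 2) ^ ((1:ℝ)/2)
      ≤ (∫⁻ t in Set.Ioi (0:ℝ), w t * A t ^ 2) ^ ((1:ℝ)/2)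
        + (∫⁻ t in Set.Ioi (0:ℝ), w t * B t ^ 2) ^ ((1:ℝ)/2) := by
  have h := ENNReal.lintegral_Lp_add_le hA hB (by norm_num : (1:ℝ) ≤ 2)
  simp only [Pi.add_apply] at h
  have e1 : ∀ t : ℝ, w t * (A t + B t) ^ 2
      = (w t ^ ((1:ℝ)/2) * A t + w t ^ ((1:ℝ)/2) * B t) ^ (2:ℝ) := fun t => by
    rw [sq_mul_rpow, mul_add]
  have e2 : ∀ t : ℝ, w t * A t ^ 2 = (w t ^ ((1:ℝ)/2) * A t) ^ (2:ℝ) := fun t => by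
    rw [sq_mul_rpow]
  have e3 : ∀ t : ℝ, w t * B t ^ 2 = (w t ^ ((1:ℝ)/2) * B t) ^ (2:ℝ) := fun t => by
    rw [sq_mul_rpow]
  simp only [e1, e2, e3]
  exact h


/-- for `0 < s < 1/2`,
`[e^{iφ₁} φ₂]_{s,2} ≤ ‖φ₂‖_{L^{2/(1−2s)}} [φ₁]_{s,1/s} + [φ₂]_{s,2}`. -/
theorem besov_exp_mul_bound_low (s : ℝ) (hs : 0 < s) (hs' : s < 1/2)
    (φ₁ : ℝ → ℝ) (hφ₁ : Measurable φ₁)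
    (φ₂ : ℝ → ℂ) (h2 : MemLp φ₂ 2 volume)
    (hq : MemLp φ₂ (ENNReal.ofReal (2/(1-2*s))) volume) :
    besovSeminorm s 2 (fun x => Complex.exp (Complex.I * (↑(φ₁ x):ℂ)) * φ₂ x)
      ≤ eLpNorm φ₂ (ENNReal.ofReal (2/(1-2*s))) volume
          * besovSeminorm s (ENNReal.ofReal (1/s)) φ₁
        + besovSeminorm s 2 φ₂ := by
  have h1 : (0:ℝ) < 1 - 2*s := by linarith
  set q : ℝ≥0∞ := ENNReal.ofReal (2/(1-2*s)) with hqdef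
  set r : ℝ≥0∞ := ENNReal.ofReal (1/s) with hrdef
  set C : ℝ≥0∞ := eLpNorm φ₂ q volume with hCdef
  set Φ : ℝ → ℂ := fun x => Complex.exp (Complex.I * (↑(φ₁ x):ℂ)) * φ₂ x with hΦ
  -- Hölder exponents
  have hpqr : 1/(2:ℝ≥0∞) = 1/q + 1/r := by
    rw [one_div, one_div, one_div, hqdef, hrdef,
      ← ENNReal.ofReal_inv_of_pos (div_pos two_pos h1),
      ← ENNReal.ofReal_inv_of_pos (div_pos one_pos hs),
      inv_div, inv_div, div_one,
      ← ENNReal.ofReal_add (by positivity) (by positivity),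
      show (1-2*s)/2 + s = (2:ℝ)⁻¹ by ring,
      ENNReal.ofReal_inv_of_pos two_pos, ENNReal.ofReal_ofNat]
  -- pointwise estimate on the sup
  have hpt : ∀ t : ℝ, supDiff 2 Φ t ≤ C * supDiff r φ₁ t + supDiff 2 φ₂ t := by
    intro t
    refine iSup₂_le fun y hy => ?_
    have hmey : Measurable fun x => Complex.exp (Complex.I * (↑(φ₁ (x - y)):ℂ)) :=
      Complex.measurable_exp.comp (measurable_const.mul
        (Complex.measurable_ofReal.comp (hφ₁.comp (measurable_id.sub measurable_const))))
    have hme : Measurable fun x => Complex.exp (Complex.I * (↑(φ₁ x):ℂ)) :=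
      Complex.measurable_exp.comp (measurable_const.mul
        (Complex.measurable_ofReal.comp hφ₁))
    have hφ₂y : AEStronglyMeasurable (fun x => φ₂ (x - y)) volume :=
      h2.1.comp_measurePreserving (measurePreserving_sub_right volume y)
    set g1 : ℝ → ℂ :=
      fun x => Complex.exp (Complex.I * (↑(φ₁ (x - y)):ℂ)) * (φ₂ (x - y) - φ₂ x) with hg1
    set gd : ℝ → ℂ :=
      fun x => Complex.exp (Complex.I * (↑(φ₁ (x - y)):ℂ))
        - Complex.exp (Complex.I * (↑(φ₁ x):ℂ)) with hgd
    have hsplit : (fun x => Φ (x - y) - Φ x) = g1 + φ₂ • gd := by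
      funext x
      simp only [Pi.add_apply, Pi.smul_apply, smul_eq_mul, Pi.mul_apply, hg1, hgd, hΦ]
      ring
    have hg1m : AEStronglyMeasurable g1 volume :=
      hmey.aestronglyMeasurable.mul (hφ₂y.sub h2.1)
    have hgdm : AEStronglyMeasurable gd volume := (hmey.sub hme).aestronglyMeasurable
    have hb1 : eLpNorm g1 2 volume ≤ supDiff 2 φ₂ t := by
      have : eLpNorm g1 2 volume = eLpNorm (fun x => φ₂ (x - y) - φ₂ x) 2 volume := by
        refine eLpNorm_congr_norm_ae (Filter.Eventually.of_forall fun x => ?_)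
        simp only [hg1]
        rw [norm_mul, mul_comm Complex.I, Complex.norm_exp_ofReal_mul_I, one_mul]
      rw [this]; exact le_supDiff hy
    have hb2 : eLpNorm (φ₂ • gd) 2 volume ≤ C * supDiff r φ₁ t := by
      refine (eLpNorm_smul_le_mul_eLpNorm (hpqr := ⟨by simpa only [one_div] using hpqr.symm⟩) hgdm h2.1).trans ?_
      refine mul_le_mul_right ?_ C
      refine (eLpNorm_mono fun x => ?_).trans (le_supDiff (f := φ₁) hy)
      rw [Real.norm_eq_abs]
      exact norm_exp_I_mul_sub_le _ _
    calc eLpNorm (fun x => Φ (x - y) - Φ x) 2 volume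
        = eLpNorm (g1 + φ₂ • gd) 2 volume := by rw [hsplit]
      _ ≤ eLpNorm g1 2 volume + eLpNorm (φ₂ • gd) 2 volume :=
          eLpNorm_add_le hg1m (h2.1.smul hgdm) one_le_two
      _ ≤ supDiff 2 φ₂ t + C * supDiff r φ₁ t := add_le_add hb1 hb2
      _ = C * supDiff r φ₁ t + supDiff 2 φ₂ t := add_comm _ _
  -- measurability facts
  have hw : Measurable fun t : ℝ => ENNReal.ofReal (t ^ (-1 - 2*s)) :=
    ENNReal.measurable_ofReal.comp (measurable_id.pow measurable_const)
  have hwh : Measurable fun t : ℝ => (ENNReal.ofReal (t ^ (-1 - 2*s))) ^ ((1:ℝ)/2) :=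
    hw.pow measurable_const
  have hS₁ : Measurable (supDiff r φ₁) := (supDiff_mono r φ₁).measurable
  have hS₂ : Measurable (supDiff 2 φ₂) := (supDiff_mono 2 φ₂).measurable
  have hCne : C ^ 2 ≠ ⊤ := by
    simp only [pow_two]
    exact ENNReal.mul_ne_top hq.2.ne hq.2.ne
  -- main chain
  rw [besov_eq, besov_eq, besov_eq]
  calc (∫⁻ t in Set.Ioi (0:ℝ),
          ENNReal.ofReal (t ^ (-1 - 2*s)) * supDiff 2 Φ t ^ 2) ^ ((1:ℝ)/2)
      ≤ (∫⁻ t in Set.Ioi (0:ℝ),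
          ENNReal.ofReal (t ^ (-1 - 2*s))
            * (C * supDiff r φ₁ t + supDiff 2 φ₂ t) ^ 2) ^ ((1:ℝ)/2) := by
        refine ENNReal.rpow_le_rpow (lintegral_mono fun t => ?_) (by norm_num)
        exact mul_le_mul_right (pow_le_pow_left' (hpt t) 2) _
    _ ≤ (∫⁻ t in Set.Ioi (0:ℝ),
          ENNReal.ofReal (t ^ (-1 - 2*s)) * (C * supDiff r φ₁ t) ^ 2) ^ ((1:ℝ)/2)
        + (∫⁻ t in Set.Ioi (0:ℝ),
            ENNReal.ofReal (t ^ (-1 - 2*s)) * supDiff 2 φ₂ t ^ 2) ^ ((1:ℝ)/2) :=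
        weighted_minkowski
          ((hwh.mul (measurable_const.mul hS₁)).aemeasurable)
          ((hwh.mul hS₂).aemeasurable)
    _ = C * (∫⁻ t in Set.Ioi (0:ℝ),
          ENNReal.ofReal (t ^ (-1 - 2*s)) * supDiff r φ₁ t ^ 2) ^ ((1:ℝ)/2)
        + (∫⁻ t in Set.Ioi (0:ℝ),
            ENNReal.ofReal (t ^ (-1 - 2*s)) * supDiff 2 φ₂ t ^ 2) ^ ((1:ℝ)/2) := by
        congr 1
        have e : ∀ t : ℝ, ENNReal.ofReal (t ^ (-1 - 2*s)) * (C * supDiff r φ₁ t) ^ 2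
            = C ^ 2 * (ENNReal.ofReal (t ^ (-1 - 2*s)) * supDiff r φ₁ t ^ 2) := fun t => by
          rw [mul_pow]; ring
        simp only [e]
        rw [lintegral_const_mul' _ _ hCne,
          ENNReal.mul_rpow_of_nonneg _ _ (by norm_num : (0:ℝ) ≤ 1/2)]
        congr 1
        rw [← ENNReal.rpow_natCast C 2, ← ENNReal.rpow_mul]
        norm_num
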